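/- Let G be a finite graph, τ a k-tangle in G, and w : V(G) → ℝ≥0 a weight function such that w(A) < w(B) for every maximal element (A,B) of τ (with respect to the order (A,B) ≤ (C,D) iff A ⊆ C and D ⊆ B). Then for every separation (C,D) of order < k, (C,D) ∈ τ if and only if w(C) < w(D). -/

import Mathlib

open Finset

variable {V : Type*} [Fintype V] [DecidableEq V]

/-- `(A,B)` is a separation of the graph `G`: `A ∪ B = V` and no edge joins
`A \ B` to `B \ A`. -/
def IsSep (G : SimpleGraph V) (A B : Finset V) : Prop :=
  A ∪ B = Finset.univ ∧ ∀ a ∈ A \ B, ∀ b ∈ B \ A, ¬ G.Adj a b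

/-- `G = G[A₁] ∪ G[A₂] ∪ G[A₃]`: the three sets cover the vertices and every
edge of `G` has both endpoints inside some `Aᵢ`. -/
def CoversGraph (G : SimpleGraph V) (A₁ A₂ A₃ : Finset V) : Prop :=
  A₁ ∪ A₂ ∪ A₃ = Finset.univ ∧
  ∀ a b, G.Adj a b →
    (a ∈ A₁ ∧ b ∈ A₁) ∨ (a ∈ A₂ ∧ b ∈ A₂) ∨ (a ∈ A₃ ∧ b ∈ A₃)

/-- `τ` is a `k`-tangle in `G`: it contains exactly one orientation of every
separation of order `< k`, contains only such separations, and no three small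
sides of members of `τ` cover `G`. -/
def IsTangle (G : SimpleGraph V) (k : ℕ) (τ : Set (Finset V × Finset V)) : Prop :=
  (∀ A B : Finset V, IsSep G A B → (A ∩ B).card < k → ((A, B) ∈ τ ↔ (B, A) ∉ τ)) ∧
  (∀ p ∈ τ, IsSep G p.1 p.2 ∧ (p.1 ∩ p.2).card < k) ∧
  (∀ p₁ ∈ τ, ∀ p₂ ∈ τ, ∀ p₃ ∈ τ,
    ¬ CoversGraph G (Prod.fst p₁) (Prod.fst p₂) (Prod.fst p₃))

/-- The partial order on separations: `(A,B) ≤ (C,D)` iff `A ⊆ C` and `D ⊆ B`. -/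
def SepLE (p q : Finset V × Finset V) : Prop := p.1 ⊆ q.1 ∧ q.2 ⊆ p.2

/-- `p` is a maximal element of `τ` with respect to `SepLE`. -/
def MaximalIn (τ : Set (Finset V × Finset V)) (p : Finset V × Finset V) : Prop :=
  p ∈ τ ∧ ∀ q ∈ τ, SepLE p q → q = p

lemma tangle_key {V : Type*} [Fintype V] [DecidableEq V]
    (τ : Set (Finset V × Finset V))
    (w : V → ℝ) (hw : ∀ v, 0 ≤ w v)
    (hmax : ∀ A B : Finset V, MaximalIn τ (A, B) → ∑ a ∈ A, w a < ∑ b ∈ B, w b)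
    (p : Finset V × Finset V) (hp : p ∈ τ) :
    ∑ a ∈ p.1, w a < ∑ b ∈ p.2, w b := by
  classical
  set m : Finset V × Finset V → ℕ :=
    fun q => q.1.card + (Fintype.card V - q.2.card) with hm
  set s : Set (Finset V × Finset V) := {q | q ∈ τ ∧ SepLE p q} with hs
  have hsne : s.Nonempty := ⟨p, hp, subset_rfl, subset_rfl⟩
  obtain ⟨a, ha, hamax⟩ := Set.Finite.exists_maximalFor m s (Set.toFinite s) hsne
  have haMax : MaximalIn τ a := by
    refine ⟨ha.1, fun q hq hle => ?_⟩
    have hqs : q ∈ s := ⟨hq, ha.2.1.trans hle.1, hle.2.trans ha.2.2⟩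
    have h1 : a.1.card ≤ q.1.card := Finset.card_le_card hle.1
    have h2 : q.2.card ≤ a.2.card := Finset.card_le_card hle.2
    have h2' : Fintype.card V - a.2.card ≤ Fintype.card V - q.2.card :=
      Nat.sub_le_sub_left h2 _
    have hle' : m a ≤ m q := Nat.add_le_add h1 h2'
    have heq := hamax (j := q) hqs hle'
    simp only [hm] at heq
    have hq2 : q.2.card ≤ Fintype.card V := Finset.card_le_univ _
    have ha2 : a.2.card ≤ Fintype.card V := Finset.card_le_univ _
    have e1 : a.1.card = q.1.card := le_antisymm h1 (by omega)
    have e2' : Fintype.card V - a.2.card = Fintype.card V - q.2.card := by omega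
    have e2 : a.2.card = q.2.card := by omega
    have : q.1 = a.1 := (Finset.eq_of_subset_of_card_le hle.1 e1.ge).symm
    have : q.2 = a.2 := Finset.eq_of_subset_of_card_le hle.2 e2.le
    exact Prod.ext ‹q.1 = a.1› this
  have h := hmax a.1 a.2 (by simpa using haMax)
  calc ∑ x ∈ p.1, w x ≤ ∑ x ∈ a.1, w x :=
        Finset.sum_le_sum_of_subset_of_nonneg ha.2.1 (fun i _ _ => hw i)
    _ < ∑ x ∈ a.2, w x := h
    _ ≤ ∑ x ∈ p.2, w x :=
        Finset.sum_le_sum_of_subset_of_nonneg ha.2.2 (fun i _ _ => hw i)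

theorem stmt3 {V : Type*} [Fintype V] [DecidableEq V] (G : SimpleGraph V) (k : ℕ)
    (τ : Set (Finset V × Finset V)) (hτ : IsTangle G k τ)
    (w : V → ℝ) (hw : ∀ v, 0 ≤ w v)
    (hmax : ∀ A B : Finset V, MaximalIn τ (A, B) → ∑ a ∈ A, w a < ∑ b ∈ B, w b)
    (C D : Finset V) (hsep : IsSep G C D) (hord : (C ∩ D).card < k) :
    (C, D) ∈ τ ↔ ∑ c ∈ C, w c < ∑ d ∈ D, w d := by
  constructor
  · intro h
    exact tangle_key τ w hw hmax (C, D) h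
  · intro h
    have horient := hτ.1 C D hsep hord
    rw [horient]
    intro hDC
    have := tangle_key τ w hw hmax (D, C) hDC
    simp only at this
    linarith
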